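/- Let g = 2r with r ≥ 2, and let G_1 = π_g / N(ℬ^g_1). Then the image of c_r in G_1 is trivial, and for every 1 ≤ k ≤ r the image of the word b_k c_{g−k}^{-1} b_{g+1−k} c_{g+1−k} in G_1 is trivial. -/
import Mathlib


namespace Paper

/-- The free group `F_g` on the `2g` generators `a_1, b_1, …, a_g, b_g`
(the pair `(i, false)` is `a_{i+1}`, the pair `(i, true)` is `b_{i+1}`). -/
abbrev F (g : ℕ) := FreeGroup (Fin g × Bool)

/-- The generator `a_i` of `F_g`, for `1 ≤ i ≤ g`; by convention `a_i = 1` for out-of-range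
indices (in particular `a_{g+1} = 1`). -/
def a (g i : ℕ) : F g :=
  if h : 1 ≤ i ∧ i ≤ g then FreeGroup.of (⟨i - 1, by omega⟩, false) else 1

/-- The generator `b_i` of `F_g`, for `1 ≤ i ≤ g`. -/
def b (g i : ℕ) : F g :=
  if h : 1 ≤ i ∧ i ≤ g then FreeGroup.of (⟨i - 1, by omega⟩, true) else 1

/-- The word `c_i = b_i⁻¹ ⋯ b_2⁻¹ b_1⁻¹ (a_1 b_1 a_1⁻¹)(a_2 b_2 a_2⁻¹) ⋯ (a_i b_i a_i⁻¹)`,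
with `c_0 = 1`. -/
def c (g i : ℕ) : F g :=
  (((List.range i).reverse.map fun j => (b g (j + 1))⁻¹).prod) *
    (((List.range i).map fun j => a g (j + 1) * b g (j + 1) * (a g (j + 1))⁻¹).prod)

/-- The product `b_i b_{i+1} ⋯ b_j`. -/
def prodb (g i j : ℕ) : F g := ((List.range (j + 1 - i)).map fun l => b g (i + l)).prod

/-- `B^h_{0,1} = b_1 b_2 ⋯ b_h`. -/
def B01 (g h : ℕ) : F g := prodb g 1 h

/-- `B^h_{0,2} = b_1 b_2 ⋯ b_h · c_h a_{h+1}`. -/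
def B02 (g h : ℕ) : F g := prodb g 1 h * c g h * a g (h + 1)

/-- `B^h_{0,s}` for `s = 1, 2`. -/
def B0 (g s h : ℕ) : F g := if s = 1 then B01 g h else B02 g h

/-- `B^h_{2k-1} = a_k · b_k b_{k+1} ⋯ b_{h+1-k} · c_{h+1-k} a_{h+1-k}`. -/
def Bodd (g h k : ℕ) : F g :=
  a g k * prodb g k (h + 1 - k) * c g (h + 1 - k) * a g (h + 1 - k)

/-- `B^h_{2k} = a_k · b_{k+1} b_{k+2} ⋯ b_{h-k} · c_{h-k} a_{h+1-k}`. -/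
def Beven (g h k : ℕ) : F g :=
  a g k * prodb g (k + 1) (h - k) * c g (h - k) * a g (h + 1 - k)

/-- The set of words `ℬ^h_s`: it consists of `B^h_{0,s}, B^h_1, …, B^h_h` (the odd-indexed
`B^h_{2k-1}` for `2k - 1 ≤ h` and the even-indexed `B^h_{2k}` for `2k ≤ h`), together with
`a_{r+1}` and `c_r a_{r+1}` when `h = 2r + 1` is odd. -/
def Bset (g s h : ℕ) : Set (F g) :=
  {B0 g s h}
    ∪ {w | ∃ k, 1 ≤ k ∧ 2 * k - 1 ≤ h ∧ w = Bodd g h k}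
    ∪ {w | ∃ k, 1 ≤ k ∧ 2 * k ≤ h ∧ w = Beven g h k}
    ∪ (if h % 2 = 1 then {a g (h / 2 + 1), c g (h / 2) * a g (h / 2 + 1)} else (∅ : Set (F g)))

/-- The genus-`g` surface group `π_g`, presented with generators `a_1, b_1, …, a_g, b_g`
and the single relator `c_g`. -/
abbrev pi (g : ℕ) := PresentedGroup ({c g g} : Set (F g))

/-- The natural projection `F_g → π_g`. -/
abbrev toPi (g : ℕ) : F g →* pi g := PresentedGroup.mk _

/-- The quotient of `π_g` by the normal closure of the images of a set `S` of words. -/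
abbrev quotBy (g : ℕ) (S : Set (F g)) :=
  pi g ⧸ Subgroup.normalClosure (toPi g '' S)

/-- The projection `π_g → π_g / N(S)`. -/
abbrev projBy (g : ℕ) (S : Set (F g)) : pi g →* quotBy g S :=
  QuotientGroup.mk' _

section Aux

lemma c_succ (g i : ℕ) :
    c g (i + 1) = (b g (i + 1))⁻¹ * c g i * (a g (i + 1) * b g (i + 1) * (a g (i + 1))⁻¹) := by
  unfold c
  rw [List.range_succ, List.reverse_append, List.map_append, List.prod_append,
    List.map_append, List.prod_append]
  simp [mul_assoc]

lemma prodb_back (g i j : ℕ) (h : i ≤ j + 1) : prodb g i (j + 1) = prodb g i j * b g (j + 1) := by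
  unfold prodb
  rw [show j + 1 + 1 - i = (j + 1 - i) + 1 by omega, List.range_succ, List.map_append,
    List.prod_append]
  simp only [List.map_cons, List.map_nil, List.prod_cons, List.prod_nil, mul_one]
  congr 2
  omega

lemma prodb_front (g i j : ℕ) (h : i ≤ j) : prodb g i j = b g i * prodb g (i + 1) j := by
  unfold prodb
  rw [show j + 1 - i = (j - i) + 1 by omega, List.range_succ_eq_map]
  simp only [List.map_cons, List.prod_cons, List.map_map, Nat.add_zero]
  rw [show j + 1 - (i + 1) = j - i by omega]
  congr 1
  refine congrArg (α := List (F g)) List.prod ?_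
  apply List.map_congr_left
  intro l _
  simp only [Function.comp_apply]
  congr 1
  omega

lemma prodb_empty (g i : ℕ) : prodb g (i + 1) i = 1 := by
  unfold prodb
  rw [show i + 1 - (i + 1) = 0 by omega]
  simp

variable {G : Type*} [Group G]

lemma mul4_pq {x P Q y : G} (h : x * P * Q * y = 1) (hxy : x * y = 1) : P * Q = 1 := by
  have hy : y = x⁻¹ := eq_inv_of_mul_eq_one_right hxy
  subst hy
  have h2 := congrArg (fun z => x⁻¹ * z * x) h
  simpa [mul_assoc] using h2

lemma mul4_xy {x P Q y : G} (h : x * P * Q * y = 1) (hPQ : P * Q = 1) : x * y = 1 := by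
  have e : x * P * Q * y = x * (P * Q) * y := by group
  rw [e, hPQ, mul_one] at h
  exact h

lemma final_aux (x y u v P Q : G)
    (hodd : x * (u * P * v) * (v⁻¹ * Q * (y * v * y⁻¹)) * y = 1)
    (heven : x * P * Q * y = 1)
    (hxy : x * y = 1) :
    u * Q⁻¹ * v * (v⁻¹ * Q * (y * v * y⁻¹)) = 1 := by
  have hy : y = x⁻¹ := eq_inv_of_mul_eq_one_right hxy
  subst hy
  have hQ : Q = P⁻¹ := by
    have hPQ : P * Q = 1 := mul4_pq heven hxy
    exact eq_inv_of_mul_eq_one_right hPQ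
  subst hQ
  calc u * (P⁻¹)⁻¹ * v * (v⁻¹ * P⁻¹ * (x⁻¹ * v * x⁻¹⁻¹))
      = x⁻¹ * (x * (u * P * v) * (v⁻¹ * P⁻¹ * (x⁻¹ * v * x⁻¹⁻¹)) * x⁻¹) * x := by group
    _ = 1 := by rw [hodd]; group

/-- The core argument, carried out for an arbitrary group `G` and a homomorphism `φ : F g →* G`
killing all words of `ℬ^g_1` and the relator `c_g`. -/
lemma main_aux {r g : ℕ} (hr : 2 ≤ r) (hg : g = 2 * r)
    (φ : F g →* G)
    (hB : ∀ w ∈ Bset g 1 g, φ w = 1) (hc : φ (c g g) = 1) :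
    φ (c g r) = 1 ∧ ∀ k, 1 ≤ k → k ≤ r →
      φ (b g k * (c g (g - k))⁻¹ * b g (g + 1 - k) * c g (g + 1 - k)) = 1 := by
  -- the odd relations
  have hodd : ∀ k, 1 ≤ k → k ≤ r →
      φ (a g k) * φ (prodb g k (g + 1 - k)) * φ (c g (g + 1 - k)) * φ (a g (g + 1 - k)) = 1 := by
    intro k h1 h2
    have hm : Bodd g g k ∈ Bset g 1 g :=
      Or.inl (Or.inl (Or.inr ⟨k, h1, by omega, rfl⟩))
    have := hB _ hm
    simpa [Bodd, map_mul] using this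
  -- the even relations
  have heven : ∀ k, 1 ≤ k → k ≤ r →
      φ (a g k) * φ (prodb g (k + 1) (g - k)) * φ (c g (g - k)) * φ (a g (g + 1 - k)) = 1 := by
    intro k h1 h2
    have hm : Beven g g k ∈ Bset g 1 g :=
      Or.inl (Or.inr ⟨k, h1, by omega, rfl⟩)
    have := hB _ hm
    simpa [Beven, map_mul] using this
  -- B01
  have hB01 : φ (prodb g 1 g) = 1 := by
    have hm : B0 g 1 g ∈ Bset g 1 g := Or.inl (Or.inl (Or.inl rfl))
    have := hB _ hm
    simpa [B0, B01] using this
  -- the chain : α_k α_{g+1-k} = 1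
  have hchain : ∀ k, 1 ≤ k → k ≤ r → φ (a g k) * φ (a g (g + 1 - k)) = 1 := by
    intro k
    induction k with
    | zero => omega
    | succ n ih =>
      intro _ hnr
      rcases Nat.eq_zero_or_pos n with hn0 | hn1
      · subst hn0
        have h := hodd 1 le_rfl (by omega)
        rw [show g + 1 - 1 = g from rfl] at h
        rw [show g + 1 - 1 = g from rfl]
        rw [hB01, hc, mul_one, mul_one] at h
        exact h
      · have ihn := ih hn1 (by omega)
        have hPQ : φ (prodb g (n + 1) (g - n)) * φ (c g (g - n)) = 1 :=
          mul4_pq (heven n hn1 (by omega)) ihn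
        have h := hodd (n + 1) (by omega) hnr
        rw [show g + 1 - (n + 1) = g - n by omega] at h ⊢
        exact mul4_xy h hPQ
  -- c_r = 1
  have hcr : φ (c g r) = 1 := by
    have h := heven r (by omega) le_rfl
    rw [show g - r = r by omega, show g + 1 - r = r + 1 by omega] at h
    rw [prodb_empty, map_one, mul_one] at h
    have hch := hchain r (by omega) le_rfl
    rw [show g + 1 - r = r + 1 by omega] at hch
    have := mul4_pq (x := φ (a g r)) (P := (1 : G)) (Q := φ (c g r))
      (y := φ (a g (r + 1))) (by simpa using h) hch
    simpa using this
  refine ⟨hcr, ?_⟩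
  intro k h1 h2
  -- recursion for c at index g+1-k
  have hgk : g + 1 - k = (g - k) + 1 := by omega
  have hrec : c g (g + 1 - k)
      = (b g (g + 1 - k))⁻¹ * c g (g - k)
        * (a g (g + 1 - k) * b g (g + 1 - k) * (a g (g + 1 - k))⁻¹) := by
    rw [hgk]; exact c_succ g (g - k)
  -- splitting of prodb
  have hsplit : prodb g k (g + 1 - k)
      = b g k * prodb g (k + 1) (g - k) * b g (g + 1 - k) := by
    rw [hgk, prodb_back g k (g - k) (by omega), prodb_front g k (g - k) (by omega)]
  have hoddk := hodd k h1 h2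
  rw [hsplit, hrec] at hoddk
  have hevenk := heven k h1 h2
  have hch := hchain k h1 h2
  have key := final_aux (φ (a g k)) (φ (a g (g + 1 - k))) (φ (b g k)) (φ (b g (g + 1 - k)))
    (φ (prodb g (k + 1) (g - k))) (φ (c g (g - k)))
    (by simpa [map_mul, map_inv, mul_assoc] using hoddk)
    (by simpa [mul_assoc] using hevenk) hch
  have : φ (b g k * (c g (g - k))⁻¹ * b g (g + 1 - k) * c g (g + 1 - k))
      = φ (b g k) * (φ (c g (g - k)))⁻¹ * φ (b g (g + 1 - k))
        * ((φ (b g (g + 1 - k)))⁻¹ * φ (c g (g - k))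
          * (φ (a g (g + 1 - k)) * φ (b g (g + 1 - k)) * (φ (a g (g + 1 - k)))⁻¹)) := by
    rw [hrec]
    simp [map_mul, map_inv, mul_assoc]
  rw [this]
  exact key

end Aux

theorem G1_cr_and_bk_relations (r g : ℕ) (hr : 2 ≤ r) (hg : g = 2 * r) :
    projBy g (Bset g 1 g) (toPi g (c g r)) = 1 ∧
      ∀ k, 1 ≤ k → k ≤ r →
        projBy g (Bset g 1 g)
          (toPi g (b g k * (c g (g - k))⁻¹ * b g (g + 1 - k) * c g (g + 1 - k))) = 1 := by
  set S := Bset g 1 g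
  set φ : F g →* quotBy g S := (projBy g S).comp (toPi g) with hφ
  have hB : ∀ w ∈ S, φ w = 1 := by
    intro w hw
    show projBy g S (toPi g w) = 1
    exact (QuotientGroup.eq_one_iff _).mpr
      (Subgroup.subset_normalClosure (Set.mem_image_of_mem _ hw))
  have hc : φ (c g g) = 1 := by
    show projBy g S (toPi g (c g g)) = 1
    have : toPi g (c g g) = 1 := by
      exact (QuotientGroup.eq_one_iff _).mpr (Subgroup.subset_normalClosure rfl)
    rw [this, map_one]
  have := main_aux hr hg φ hB hc
  exact this

end Paper
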